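/- Fix an integer N ≥ 1 and reals 0 < δ ≤ M. Let (A_n)_{n≥1} be a sequence of N × N real matrices all of whose entries lie in the interval [δ, M]. For each m ≥ 1 let K_m = { (A_1 A_2 ⋯ A_m x)/‖A_1 A_2 ⋯ A_m x‖₁ : x ∈ ℝ^N, x ≥ 0 coordinatewise, x ≠ 0 }, where ‖v‖₁ = Σ_i |v_i|. Then the intersection ⋂_{m≥1} closure(K_m) consists of exactly one point. -/

import Mathlib

open scoped BigOperators

/-- The ordered product `A₁ A₂ ⋯ A_m` of the first `m` matrices of the sequence
`(A_n)_{n ≥ 1}`. -/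
def matProd {N : ℕ} (A : ℕ → Matrix (Fin N) (Fin N) ℝ) (m : ℕ) :
    Matrix (Fin N) (Fin N) ℝ :=
  ((List.range m).map (fun i => A (i + 1))).prod

/-- The set `K_m` of normalizations (in ℓ¹-norm) of images under `A₁ A₂ ⋯ A_m` of the
nonzero nonnegative vectors of `ℝ^N`. -/
def normImage {N : ℕ} (A : ℕ → Matrix (Fin N) (Fin N) ℝ) (m : ℕ) :
    Set (Fin N → ℝ) :=
  {w | ∃ x : Fin N → ℝ, (∀ i, 0 ≤ x i) ∧ x ≠ 0 ∧
    w = (∑ i, |(matProd A m).mulVec x i|)⁻¹ • (matProd A m).mulVec x}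

namespace NIaux

variable {N : ℕ} {δ M : ℝ} {A : ℕ → Matrix (Fin N) (Fin N) ℝ}

lemma matProd_one : matProd A 1 = A 1 := by
  simp [matProd, List.range_succ]

lemma matProd_succ (m : ℕ) : matProd A (m + 1) = matProd A m * A (m + 1) := by
  simp [matProd, List.range_succ]

/-- Column sums of the product. -/
noncomputable def cS (A : ℕ → Matrix (Fin N) (Fin N) ℝ) (m : ℕ) (j : Fin N) : ℝ :=
  ∑ i, matProd A m i j

/-- Column-normalized product. -/
noncomputable def Qm (A : ℕ → Matrix (Fin N) (Fin N) ℝ) (m : ℕ) (i j : Fin N) : ℝ :=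
  matProd A m i j / cS A m j

/-- The column-stochastic transition from level `m` to level `m+1`. -/
noncomputable def sm (A : ℕ → Matrix (Fin N) (Fin N) ℝ) (m : ℕ) (k j : Fin N) : ℝ :=
  cS A m k * A (m + 1) k j / cS A (m + 1) j

lemma finNonempty (hN : 1 ≤ N) : Nonempty (Fin N) := Fin.pos_iff_nonempty.mp hN

lemma prod_pos (hN : 1 ≤ N) (hδ : 0 < δ)
    (hA : ∀ n, 1 ≤ n → ∀ i j, A n i j ∈ Set.Icc δ M) :
    ∀ m, 1 ≤ m → ∀ i j, 0 < matProd A m i j := by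
  haveI := finNonempty hN
  intro m hm
  induction m, hm using Nat.le_induction with
  | base =>
    intro i j
    rw [matProd_one]
    exact lt_of_lt_of_le hδ (hA 1 le_rfl i j).1
  | succ m hm ih =>
    intro i j
    rw [matProd_succ, Matrix.mul_apply]
    refine Finset.sum_pos (fun k _ => mul_pos (ih i k)
      (lt_of_lt_of_le hδ (hA (m + 1) (by omega) k j).1)) Finset.univ_nonempty

lemma rowcomp (hN : 1 ≤ N) (hδ : 0 < δ) (hδM : δ ≤ M)
    (hA : ∀ n, 1 ≤ n → ∀ i j, A n i j ∈ Set.Icc δ M) :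
    ∀ m, 1 ≤ m → ∀ i j j', δ * matProd A m i j ≤ M * matProd A m i j' := by
  intro m hm
  induction m, hm using Nat.le_induction with
  | base =>
    intro i j j'
    rw [matProd_one]
    calc δ * A 1 i j ≤ δ * M := mul_le_mul_of_nonneg_left (hA 1 le_rfl i j).2 hδ.le
      _ = M * δ := by ring
      _ ≤ M * A 1 i j' := mul_le_mul_of_nonneg_left (hA 1 le_rfl i j').1 (hδ.trans_le hδM).le
  | succ m hm _ =>
    intro i j j'
    rw [matProd_succ, Matrix.mul_apply, Matrix.mul_apply, Finset.mul_sum, Finset.mul_sum]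
    refine Finset.sum_le_sum fun k _ => ?_
    have hP : (0:ℝ) ≤ matProd A m i k := (prod_pos hN hδ hA m hm i k).le
    have h1 : δ * A (m + 1) k j ≤ M * A (m + 1) k j' := by
      calc δ * A (m + 1) k j ≤ δ * M :=
            mul_le_mul_of_nonneg_left (hA (m + 1) (by omega) k j).2 hδ.le
        _ = M * δ := by ring
        _ ≤ M * A (m + 1) k j' :=
            mul_le_mul_of_nonneg_left (hA (m + 1) (by omega) k j').1 (hδ.trans_le hδM).le
    calc δ * (matProd A m i k * A (m + 1) k j) = matProd A m i k * (δ * A (m + 1) k j) := by ring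
      _ ≤ matProd A m i k * (M * A (m + 1) k j') := mul_le_mul_of_nonneg_left h1 hP
      _ = M * (matProd A m i k * A (m + 1) k j') := by ring

lemma cS_pos (hN : 1 ≤ N) (hδ : 0 < δ)
    (hA : ∀ n, 1 ≤ n → ∀ i j, A n i j ∈ Set.Icc δ M) (m : ℕ) (hm : 1 ≤ m) (j : Fin N) :
    0 < cS A m j := by
  haveI := finNonempty hN
  exact Finset.sum_pos (fun i _ => prod_pos hN hδ hA m hm i j) Finset.univ_nonempty

lemma ccomp (hN : 1 ≤ N) (hδ : 0 < δ) (hδM : δ ≤ M)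
    (hA : ∀ n, 1 ≤ n → ∀ i j, A n i j ∈ Set.Icc δ M) (m : ℕ) (hm : 1 ≤ m) (j j' : Fin N) :
    δ * cS A m j ≤ M * cS A m j' := by
  unfold cS
  rw [Finset.mul_sum, Finset.mul_sum]
  exact Finset.sum_le_sum fun i _ => rowcomp hN hδ hδM hA m hm i j j'

lemma cS_rec (m : ℕ) (j : Fin N) :
    cS A (m + 1) j = ∑ k, cS A m k * A (m + 1) k j := by
  unfold cS
  rw [matProd_succ]
  simp only [Matrix.mul_apply]
  rw [Finset.sum_comm]
  simp [Finset.sum_mul]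

lemma Qm_nonneg (hN : 1 ≤ N) (hδ : 0 < δ)
    (hA : ∀ n, 1 ≤ n → ∀ i j, A n i j ∈ Set.Icc δ M) (m : ℕ) (hm : 1 ≤ m) (i j : Fin N) :
    0 ≤ Qm A m i j :=
  div_nonneg (prod_pos hN hδ hA m hm i j).le (cS_pos hN hδ hA m hm j).le

lemma Qm_colsum (hN : 1 ≤ N) (hδ : 0 < δ)
    (hA : ∀ n, 1 ≤ n → ∀ i j, A n i j ∈ Set.Icc δ M) (m : ℕ) (hm : 1 ≤ m) (j : Fin N) :
    ∑ i, Qm A m i j = 1 := by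
  unfold Qm
  rw [← Finset.sum_div]
  exact div_self (cS_pos hN hδ hA m hm j).ne'

lemma sm_colsum (hN : 1 ≤ N) (hδ : 0 < δ)
    (hA : ∀ n, 1 ≤ n → ∀ i j, A n i j ∈ Set.Icc δ M) (m : ℕ) (hm : 1 ≤ m) (j : Fin N) :
    ∑ k, sm A m k j = 1 := by
  unfold sm
  rw [← Finset.sum_div, ← cS_rec]
  exact div_self (cS_pos hN hδ hA (m + 1) (by omega) j).ne'

lemma sm_low (hN : 1 ≤ N) (hδ : 0 < δ) (hδM : δ ≤ M)
    (hA : ∀ n, 1 ≤ n → ∀ i j, A n i j ∈ Set.Icc δ M) (m : ℕ) (hm : 1 ≤ m) (k j : Fin N) :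
    δ ^ 2 / ((N : ℝ) * M ^ 2) ≤ sm A m k j := by
  have hM : (0:ℝ) < M := hδ.trans_le hδM
  have hNpos : (0:ℝ) < (N : ℝ) := by exact_mod_cast hN
  have hc' : 0 < cS A (m + 1) j := cS_pos hN hδ hA (m + 1) (by omega) j
  have hck : 0 < cS A m k := cS_pos hN hδ hA m hm k
  unfold sm
  rw [div_le_div_iff₀ (by positivity) hc']
  have h1 : δ ^ 2 * cS A (m + 1) j ≤ ∑ _k' : Fin N, δ * (M ^ 2 * cS A m k) := by
    rw [cS_rec, Finset.mul_sum]
    refine Finset.sum_le_sum fun k' _ => ?_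
    have hck' : 0 < cS A m k' := cS_pos hN hδ hA m hm k'
    have hAb := (hA (m + 1) (by omega) k' j).2
    have hcc := ccomp hN hδ hδM hA m hm k' k
    calc δ ^ 2 * (cS A m k' * A (m + 1) k' j)
        = δ ^ 2 * cS A m k' * A (m + 1) k' j := by ring
      _ ≤ δ ^ 2 * cS A m k' * M := mul_le_mul_of_nonneg_left hAb (by positivity)
      _ = δ * M * (δ * cS A m k') := by ring
      _ ≤ δ * M * (M * cS A m k) := mul_le_mul_of_nonneg_left hcc (by positivity)
      _ = δ * (M ^ 2 * cS A m k) := by ring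
  have h2 : (∑ _k' : Fin N, δ * (M ^ 2 * cS A m k)) = (N : ℝ) * (δ * (M ^ 2 * cS A m k)) := by
    rw [Finset.sum_const, Finset.card_univ, Fintype.card_fin, nsmul_eq_mul]
  have hAl := (hA (m + 1) (by omega) k j).1
  calc δ ^ 2 * cS A (m + 1) j ≤ (N : ℝ) * (δ * (M ^ 2 * cS A m k)) := by rw [← h2]; exact h1
    _ = ((N : ℝ) * M ^ 2 * cS A m k) * δ := by ring
    _ ≤ ((N : ℝ) * M ^ 2 * cS A m k) * A (m + 1) k j :=
        mul_le_mul_of_nonneg_left hAl (by positivity)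
    _ = cS A m k * A (m + 1) k j * ((N : ℝ) * M ^ 2) := by ring

lemma Qm_rec (hN : 1 ≤ N) (hδ : 0 < δ)
    (hA : ∀ n, 1 ≤ n → ∀ i j, A n i j ∈ Set.Icc δ M) (m : ℕ) (hm : 1 ≤ m) (i j : Fin N) :
    Qm A (m + 1) i j = ∑ k, Qm A m i k * sm A m k j := by
  unfold Qm sm
  have hterm : ∀ k, matProd A m i k / cS A m k * (cS A m k * A (m + 1) k j / cS A (m + 1) j)
      = matProd A m i k * A (m + 1) k j / cS A (m + 1) j := by
    intro k
    have hck : cS A m k ≠ 0 := (cS_pos hN hδ hA m hm k).ne'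
    rw [div_mul_div_comm,
      show matProd A m i k * (cS A m k * A (m + 1) k j)
        = cS A m k * (matProd A m i k * A (m + 1) k j) by ring,
      mul_div_mul_left _ _ hck]
  rw [Finset.sum_congr rfl fun k _ => hterm k, ← Finset.sum_div]
  congr 1
  rw [matProd_succ, Matrix.mul_apply]

lemma nonexp (Q : Fin N → Fin N → ℝ) (hQ0 : ∀ i j, 0 ≤ Q i j)
    (hQ1 : ∀ j, ∑ i, Q i j = 1) (z : Fin N → ℝ) :
    ∑ i, |∑ j, Q i j * z j| ≤ ∑ j, |z j| := by
  calc ∑ i, |∑ j, Q i j * z j| ≤ ∑ i, ∑ j, |Q i j * z j| :=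
        Finset.sum_le_sum fun i _ => Finset.abs_sum_le_sum_abs _ _
    _ = ∑ i, ∑ j, Q i j * |z j| := by
        refine Finset.sum_congr rfl fun i _ => Finset.sum_congr rfl fun j _ => ?_
        rw [abs_mul, abs_of_nonneg (hQ0 i j)]
    _ = ∑ j, (∑ i, Q i j) * |z j| := by
        rw [Finset.sum_comm]; simp only [Finset.sum_mul]
    _ = ∑ j, |z j| := by simp only [hQ1, one_mul]

lemma dobrushin (ε : ℝ) (hε : 0 ≤ ε) (S : Fin N → Fin N → ℝ)
    (hS : ∀ i j, ε ≤ S i j) (hS1 : ∀ j, ∑ i, S i j = 1)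
    (z : Fin N → ℝ) (hz : ∑ j, z j = 0) :
    ∑ i, |∑ j, S i j * z j| ≤ (1 - (N : ℝ) * ε) * ∑ j, |z j| := by
  have key : ∀ i, ∑ j, S i j * z j = ∑ j, (S i j - ε) * z j := by
    intro i
    simp only [sub_mul, Finset.sum_sub_distrib, ← Finset.mul_sum, hz, mul_zero, sub_zero]
  calc ∑ i, |∑ j, S i j * z j| = ∑ i, |∑ j, (S i j - ε) * z j| := by
        simp only [key]
    _ ≤ ∑ i, ∑ j, |(S i j - ε) * z j| :=
        Finset.sum_le_sum fun i _ => Finset.abs_sum_le_sum_abs _ _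
    _ = ∑ i, ∑ j, (S i j - ε) * |z j| := by
        refine Finset.sum_congr rfl fun i _ => Finset.sum_congr rfl fun j _ => ?_
        rw [abs_mul, abs_of_nonneg (sub_nonneg.mpr (hS i j))]
    _ = ∑ j, (∑ i, (S i j - ε)) * |z j| := by
        rw [Finset.sum_comm]; simp only [Finset.sum_mul]
    _ = ∑ j, (1 - (N : ℝ) * ε) * |z j| := by
        refine Finset.sum_congr rfl fun j _ => ?_
        rw [Finset.sum_sub_distrib, hS1, Finset.sum_const, Finset.card_univ,
          Fintype.card_fin, nsmul_eq_mul]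
    _ = (1 - (N : ℝ) * ε) * ∑ j, |z j| := by rw [← Finset.mul_sum]

lemma contract (hN : 1 ≤ N) (hδ : 0 < δ) (hδM : δ ≤ M)
    (hA : ∀ n, 1 ≤ n → ∀ i j, A n i j ∈ Set.Icc δ M) :
    ∀ m, 1 ≤ m → ∀ z : Fin N → ℝ, (∑ j, z j) = 0 →
      ∑ i, |∑ j, Qm A m i j * z j| ≤ (1 - δ ^ 2 / M ^ 2) ^ (m - 1) * ∑ j, |z j| := by
  have hM : (0:ℝ) < M := hδ.trans_le hδM
  have hθ0 : (0:ℝ) ≤ 1 - δ ^ 2 / M ^ 2 := by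
    rw [sub_nonneg, div_le_one (by positivity)]
    nlinarith
  intro m hm
  induction m, hm using Nat.le_induction with
  | base =>
    intro z hz
    simpa using nonexp (Qm A 1) (Qm_nonneg hN hδ hA 1 le_rfl) (Qm_colsum hN hδ hA 1 le_rfl) z
  | succ m hm ih =>
    intro z hz
    set θ : ℝ := 1 - δ ^ 2 / M ^ 2 with hθdef
    have hrw : ∀ i, ∑ j, Qm A (m + 1) i j * z j
        = ∑ k, Qm A m i k * (∑ j, sm A m k j * z j) := by
      intro i
      simp only [Qm_rec hN hδ hA m hm, Finset.sum_mul]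
      rw [Finset.sum_comm]
      refine Finset.sum_congr rfl fun k _ => ?_
      rw [Finset.mul_sum]
      refine Finset.sum_congr rfl fun j _ => ?_
      ring
    set w : Fin N → ℝ := fun k => ∑ j, sm A m k j * z j with hwdef
    have hwsum : ∑ k, w k = 0 := by
      simp only [hwdef]
      rw [Finset.sum_comm]
      have h : ∀ j, ∑ k, sm A m k j * z j = z j := by
        intro j
        rw [← Finset.sum_mul, sm_colsum hN hδ hA m hm, one_mul]
      simp only [h, hz]
    have hNε : (1 : ℝ) - (N : ℝ) * (δ ^ 2 / ((N : ℝ) * M ^ 2)) = θ := by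
      have hNpos : (0:ℝ) < (N : ℝ) := by exact_mod_cast hN
      rw [hθdef]
      field_simp
    have hdob : ∑ k, |w k| ≤ θ * ∑ j, |z j| := by
      rw [← hNε]
      exact dobrushin (δ ^ 2 / ((N : ℝ) * M ^ 2))
        (by positivity) (sm A m) (sm_low hN hδ hδM hA m hm)
        (sm_colsum hN hδ hA m hm) z hz
    calc ∑ i, |∑ j, Qm A (m + 1) i j * z j| = ∑ i, |∑ k, Qm A m i k * w k| := by
          simp only [hrw]
          rfl
      _ ≤ θ ^ (m - 1) * ∑ k, |w k| := ih w hwsum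
      _ ≤ θ ^ (m - 1) * (θ * ∑ j, |z j|) :=
          mul_le_mul_of_nonneg_left hdob (pow_nonneg hθ0 _)
      _ = θ ^ (m - 1 + 1) * ∑ j, |z j| := by rw [pow_succ]; ring
      _ = θ ^ (m + 1 - 1) * ∑ j, |z j| := by
          congr 2
          omega

lemma mass_eq (hN : 1 ≤ N) (hδ : 0 < δ)
    (hA : ∀ n, 1 ≤ n → ∀ i j, A n i j ∈ Set.Icc δ M) (m : ℕ) (hm : 1 ≤ m)
    (x : Fin N → ℝ) (hx : ∀ i, 0 ≤ x i) :
    (∑ i, |(matProd A m).mulVec x i|) = ∑ j, cS A m j * x j := by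
  have habs : ∀ i, |(matProd A m).mulVec x i| = ∑ j, matProd A m i j * x j := by
    intro i
    rw [Matrix.mulVec, dotProduct]
    exact abs_of_nonneg (Finset.sum_nonneg fun j _ =>
      mul_nonneg (prod_pos hN hδ hA m hm i j).le (hx j))
  simp only [habs]
  rw [Finset.sum_comm]
  simp [cS, Finset.sum_mul]

lemma mass_pos (hN : 1 ≤ N) (hδ : 0 < δ)
    (hA : ∀ n, 1 ≤ n → ∀ i j, A n i j ∈ Set.Icc δ M) (m : ℕ) (hm : 1 ≤ m)
    (x : Fin N → ℝ) (hx : ∀ i, 0 ≤ x i) (hx0 : x ≠ 0) :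
    0 < ∑ j, cS A m j * x j := by
  obtain ⟨j₀, hj₀⟩ := Function.ne_iff.mp hx0
  have hj₀' : 0 < x j₀ := lt_of_le_of_ne (hx j₀) (Ne.symm hj₀)
  exact Finset.sum_pos' (fun j _ => mul_nonneg (cS_pos hN hδ hA m hm j).le (hx j))
    ⟨j₀, Finset.mem_univ j₀, mul_pos (cS_pos hN hδ hA m hm j₀) hj₀'⟩

lemma repr_eq (hN : 1 ≤ N) (hδ : 0 < δ)
    (hA : ∀ n, 1 ≤ n → ∀ i j, A n i j ∈ Set.Icc δ M) (m : ℕ) (hm : 1 ≤ m)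
    (x : Fin N → ℝ) (hx : ∀ i, 0 ≤ x i) (hx0 : x ≠ 0) (i : Fin N) :
    (∑ i', |(matProd A m).mulVec x i'|)⁻¹ * (matProd A m).mulVec x i
      = ∑ j, Qm A m i j * (cS A m j * x j / ∑ j', cS A m j' * x j') := by
  have hterm : ∀ j, Qm A m i j * (cS A m j * x j / ∑ j', cS A m j' * x j')
      = matProd A m i j * x j / ∑ j', cS A m j' * x j' := by
    intro j
    unfold Qm
    have hck : cS A m j ≠ 0 := (cS_pos hN hδ hA m hm j).ne'
    rw [div_mul_div_comm,
      show matProd A m i j * (cS A m j * x j) = cS A m j * (matProd A m i j * x j) by ring,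
      mul_div_mul_left _ _ hck]
  rw [Finset.sum_congr rfl fun j _ => hterm j, ← Finset.sum_div]
  rw [mass_eq hN hδ hA m hm x hx, Matrix.mulVec, dotProduct, inv_mul_eq_div]

lemma key_bound (hN : 1 ≤ N) (hδ : 0 < δ) (hδM : δ ≤ M)
    (hA : ∀ n, 1 ≤ n → ∀ i j, A n i j ∈ Set.Icc δ M) (m : ℕ) (hm : 1 ≤ m)
    {w₁ w₂ : Fin N → ℝ} (h₁ : w₁ ∈ normImage A m) (h₂ : w₂ ∈ normImage A m) :
    ∑ i, |w₁ i - w₂ i| ≤ 2 * (1 - δ ^ 2 / M ^ 2) ^ (m - 1) := by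
  obtain ⟨x, hx, hx0, hw₁⟩ := h₁
  obtain ⟨y, hy, hy0, hw₂⟩ := h₂
  set u : Fin N → ℝ := fun j => cS A m j * x j / ∑ j', cS A m j' * x j' with hu
  set v : Fin N → ℝ := fun j => cS A m j * y j / ∑ j', cS A m j' * y j' with hv
  have hTx := mass_pos hN hδ hA m hm x hx hx0
  have hTy := mass_pos hN hδ hA m hm y hy hy0
  have husum : ∑ j, u j = 1 := by
    simp only [hu]
    rw [← Finset.sum_div]
    exact div_self hTx.ne'
  have hvsum : ∑ j, v j = 1 := by
    simp only [hv]
    rw [← Finset.sum_div]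
    exact div_self hTy.ne'
  have hunn : ∀ j, 0 ≤ u j := fun j =>
    div_nonneg (mul_nonneg (cS_pos hN hδ hA m hm j).le (hx j)) hTx.le
  have hvnn : ∀ j, 0 ≤ v j := fun j =>
    div_nonneg (mul_nonneg (cS_pos hN hδ hA m hm j).le (hy j)) hTy.le
  have hzsum : ∑ j, (u j - v j) = 0 := by
    rw [Finset.sum_sub_distrib, husum, hvsum, sub_self]
  have hz2 : ∑ j, |u j - v j| ≤ 2 := by
    calc ∑ j, |u j - v j| ≤ ∑ j, (|u j| + |v j|) :=
          Finset.sum_le_sum fun j _ => abs_sub _ _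
      _ = (∑ j, u j) + ∑ j, v j := by
          rw [Finset.sum_add_distrib]
          congr 1
          · exact Finset.sum_congr rfl fun j _ => abs_of_nonneg (hunn j)
          · exact Finset.sum_congr rfl fun j _ => abs_of_nonneg (hvnn j)
      _ = 2 := by rw [husum, hvsum]; norm_num
  have hcoord : ∀ i, w₁ i - w₂ i = ∑ j, Qm A m i j * (u j - v j) := by
    intro i
    have e1 : w₁ i = ∑ j, Qm A m i j * u j := by
      rw [hw₁, Pi.smul_apply, smul_eq_mul]
      exact repr_eq hN hδ hA m hm x hx hx0 i
    have e2 : w₂ i = ∑ j, Qm A m i j * v j := by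
      rw [hw₂, Pi.smul_apply, smul_eq_mul]
      exact repr_eq hN hδ hA m hm y hy hy0 i
    rw [e1, e2, ← Finset.sum_sub_distrib]
    exact Finset.sum_congr rfl fun j _ => by ring
  calc ∑ i, |w₁ i - w₂ i| = ∑ i, |∑ j, Qm A m i j * (u j - v j)| := by
        simp only [hcoord]
    _ ≤ (1 - δ ^ 2 / M ^ 2) ^ (m - 1) * ∑ j, |u j - v j| :=
        contract hN hδ hδM hA m hm _ hzsum
    _ ≤ (1 - δ ^ 2 / M ^ 2) ^ (m - 1) * 2 := by
        refine mul_le_mul_of_nonneg_left hz2 (pow_nonneg ?_ _)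
        have hM : (0:ℝ) < M := hδ.trans_le hδM
        rw [sub_nonneg, div_le_one (by positivity)]
        nlinarith
    _ = 2 * (1 - δ ^ 2 / M ^ 2) ^ (m - 1) := by ring

lemma nested (hN : 1 ≤ N) (hδ : 0 < δ)
    (hA : ∀ n, 1 ≤ n → ∀ i j, A n i j ∈ Set.Icc δ M) (m : ℕ) (hm : 1 ≤ m) :
    normImage A (m + 1) ⊆ normImage A m := by
  haveI := finNonempty hN
  rintro w ⟨x, hx, hx0, rfl⟩
  obtain ⟨j₀, hj₀⟩ := Function.ne_iff.mp hx0
  have hj₀' : 0 < x j₀ := lt_of_le_of_ne (hx j₀) (Ne.symm hj₀)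
  refine ⟨(A (m + 1)).mulVec x, ?_, ?_, ?_⟩
  · intro i
    rw [Matrix.mulVec, dotProduct]
    exact Finset.sum_nonneg fun j _ =>
      mul_nonneg (hδ.le.trans (hA (m + 1) (by omega) i j).1) (hx j)
  · intro h
    obtain ⟨i⟩ := finNonempty hN
    have hpos : 0 < (A (m + 1)).mulVec x i := by
      rw [Matrix.mulVec, dotProduct]
      refine Finset.sum_pos' (fun j _ =>
        mul_nonneg (hδ.le.trans (hA (m + 1) (by omega) i j).1) (hx j))
        ⟨j₀, Finset.mem_univ j₀,
          mul_pos (hδ.trans_le (hA (m + 1) (by omega) i j₀).1) hj₀'⟩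
    rw [h] at hpos
    simp at hpos
  · rw [Matrix.mulVec_mulVec, ← matProd_succ]

lemma nonempty_normImage (hN : 1 ≤ N) (m : ℕ) : (normImage A m).Nonempty := by
  haveI := finNonempty hN
  obtain ⟨i⟩ := finNonempty hN
  refine ⟨_, (fun _ => 1), fun _ => zero_le_one, ?_, rfl⟩
  intro h
  have := congrFun h i
  simp at this

lemma subset_ball (hN : 1 ≤ N) (hδ : 0 < δ)
    (hA : ∀ n, 1 ≤ n → ∀ i j, A n i j ∈ Set.Icc δ M) (m : ℕ) (hm : 1 ≤ m) :
    normImage A m ⊆ Metric.closedBall (0 : Fin N → ℝ) 1 := by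
  rintro w ⟨x, hx, hx0, rfl⟩
  rw [Metric.mem_closedBall, dist_zero_right]
  rw [pi_norm_le_iff_of_nonneg zero_le_one]
  intro i
  have hT : 0 < ∑ i', |(matProd A m).mulVec x i'| := by
    rw [mass_eq hN hδ hA m hm x hx]
    exact mass_pos hN hδ hA m hm x hx hx0
  have hle : |(matProd A m).mulVec x i| ≤ ∑ i', |(matProd A m).mulVec x i'| :=
    Finset.single_le_sum (f := fun i' => |(matProd A m).mulVec x i'|)
      (fun i' _ => abs_nonneg _) (Finset.mem_univ i)
  have hval : ((∑ i', |(matProd A m).mulVec x i'|)⁻¹ • (matProd A m).mulVec x) i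
      = (matProd A m).mulVec x i / (∑ i', |(matProd A m).mulVec x i'|) := by
    rw [Pi.smul_apply, smul_eq_mul, inv_mul_eq_div]
  rw [hval, Real.norm_eq_abs, abs_div, abs_of_nonneg hT.le, div_le_one hT]
  exact hle

end NIaux

theorem iInter_closure_normImage_singleton {N : ℕ} (hN : 1 ≤ N)
    (δ M : ℝ) (hδ : 0 < δ) (hδM : δ ≤ M)
    (A : ℕ → Matrix (Fin N) (Fin N) ℝ)
    (hA : ∀ n, 1 ≤ n → ∀ i j, A n i j ∈ Set.Icc δ M) :
    ∃ p : Fin N → ℝ,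
      (⋂ (m : ℕ) (_ : 1 ≤ m), closure (normImage A m)) = {p} := by
  classical
  have hM : (0:ℝ) < M := hδ.trans_le hδM
  set θ : ℝ := 1 - δ ^ 2 / M ^ 2 with hθdef
  have hθ0 : (0:ℝ) ≤ θ := by
    rw [hθdef, sub_nonneg, div_le_one (by positivity)]
    nlinarith
  have hθ1 : θ < 1 := by
    rw [hθdef]
    have : 0 < δ ^ 2 / M ^ 2 := by positivity
    linarith
  set K : ℕ → Set (Fin N → ℝ) := fun n => closure (normImage A (n + 1)) with hK
  have hKeq : (⋂ (m : ℕ) (_ : 1 ≤ m), closure (normImage A m)) = ⋂ n, K n := by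
    ext w
    simp only [Set.mem_iInter, hK]
    constructor
    · intro h n
      exact h (n + 1) (by omega)
    · intro h m hm
      obtain ⟨n, rfl⟩ : ∃ n, m = n + 1 := ⟨m - 1, by omega⟩
      exact h n
  have hsub : ∀ n, K (n + 1) ⊆ K n := fun n =>
    closure_mono (NIaux.nested hN hδ hA (n + 1) (by omega))
  have hne : ∀ n, (K n).Nonempty := fun n =>
    (NIaux.nonempty_normImage hN (n + 1)).closure
  have hclosed : ∀ n, IsClosed (K n) := fun n => isClosed_closure
  have hcpt : IsCompact (K 0) := by
    refine IsCompact.of_isClosed_subset (isCompact_closedBall (0 : Fin N → ℝ) 1)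
      (hclosed 0) ?_
    exact closure_minimal (NIaux.subset_ball hN hδ hA 1 le_rfl) Metric.isClosed_closedBall
  obtain ⟨p, hp⟩ := IsCompact.nonempty_iInter_of_sequence_nonempty_isCompact_isClosed
    K hsub hne hcpt hclosed
  refine ⟨p, ?_⟩
  rw [hKeq]
  refine Set.eq_singleton_iff_unique_mem.mpr ⟨hp, ?_⟩
  intro q hq
  have hd : ∀ n : ℕ, dist q p ≤ 2 * θ ^ n := by
    intro n
    have hq' : q ∈ K n := Set.mem_iInter.mp hq n
    have hp' : p ∈ K n := Set.mem_iInter.mp hp n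
    have hcl : (q, p) ∈ closure (normImage A (n + 1) ×ˢ normImage A (n + 1)) := by
      rw [closure_prod_eq]
      exact ⟨hq', hp'⟩
    have hCclosed : IsClosed {ab : (Fin N → ℝ) × (Fin N → ℝ) |
        ∑ i, |ab.1 i - ab.2 i| ≤ 2 * θ ^ n} := by
      refine isClosed_le ?_ continuous_const
      refine continuous_finset_sum _ fun i _ => ?_
      exact (((continuous_apply i).comp continuous_fst).sub
        ((continuous_apply i).comp continuous_snd)).abs
    have hsubset : normImage A (n + 1) ×ˢ normImage A (n + 1) ⊆
        {ab : (Fin N → ℝ) × (Fin N → ℝ) | ∑ i, |ab.1 i - ab.2 i| ≤ 2 * θ ^ n} := by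
      rintro ⟨a, b⟩ ⟨ha, hb⟩
      have := NIaux.key_bound hN hδ hδM hA (n + 1) (by omega) ha hb
      simpa using this
    have hfin : ∑ i, |q i - p i| ≤ 2 * θ ^ n :=
      closure_minimal hsubset hCclosed hcl
    rw [dist_pi_le_iff (by positivity)]
    intro i
    rw [Real.dist_eq]
    calc |q i - p i| ≤ ∑ i', |q i' - p i'| :=
          Finset.single_le_sum (f := fun i' => |q i' - p i'|)
            (fun i' _ => abs_nonneg _) (Finset.mem_univ i)
      _ ≤ 2 * θ ^ n := hfin
  have htend : Filter.Tendsto (fun n : ℕ => 2 * θ ^ n) Filter.atTop (nhds 0) := by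
    have := (tendsto_pow_atTop_nhds_zero_of_lt_one hθ0 hθ1).const_mul (2:ℝ)
    simpa using this
  have : dist q p ≤ 0 := ge_of_tendsto' htend hd
  exact dist_le_zero.mp this
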